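/- arXiv:1704.00582 — 6 statements merged into one kernel-verified Lean document; each statement's English description precedes it below -/
import Mathlib

section
/- Let β : [0,∞) → [0,∞) be continuous with β ≤ β_max. For T < 1/β_max, the operator Γ on C_b([0,T]×[0,∞)) defined by (Γf)(t,a) = f₀(t+a)·exp(−∫₀ᵗ β(a+u)du) + ∫₀ᵗ exp(−∫₀^τ β(a+u)du)·β(a+τ)·f(t−τ,0) dτ is a contraction with Lipschitz constant T·β_max in the sup norm. -/
open MeasureTheory intervalIntegral

/-- The Duhamel operator `Γ` for the dual renewal equation. -/
noncomputable def Gamma (β f₀ : ℝ → ℝ) (f : ℝ → ℝ → ℝ) (t a : ℝ) : ℝ :=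
  f₀ (t + a) * Real.exp (-∫ u in (0:ℝ)..t, β (a + u)) +
    ∫ τ in (0:ℝ)..t, Real.exp (-∫ u in (0:ℝ)..τ, β (a + u)) * β (a + τ) * f (t - τ) 0

/-- for `T < 1/β_max` the operator `Γ` is a contraction on
`C_b([0,T]×[0,∞))` with Lipschitz constant `T·β_max` for the sup norm. -/
theorem stmt3 (β f₀ : ℝ → ℝ) (βmax T : ℝ) (hβmax : 0 < βmax)
    (hβcont : Continuous β) (hβpos : ∀ a, 0 ≤ a → 0 ≤ β a)
    (hβbd : ∀ a, 0 ≤ a → β a ≤ βmax)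
    (hT : 0 < T) (hTβ : T < 1 / βmax)
    (f g : ℝ → ℝ → ℝ)
    (hf : Continuous fun p : ℝ × ℝ => f p.1 p.2)
    (hg : Continuous fun p : ℝ × ℝ => g p.1 p.2)
    (C : ℝ) (hC : ∀ t a, t ∈ Set.Icc 0 T → 0 ≤ a → |f t a - g t a| ≤ C) :
    ∀ t a, t ∈ Set.Icc 0 T → 0 ≤ a →
      |Gamma β f₀ f t a - Gamma β f₀ g t a| ≤ T * βmax * C := by
  intro t a ht ha
  obtain ⟨ht0, htT⟩ := ht
  have hC0 : 0 ≤ C := le_trans (abs_nonneg _) (hC 0 0 ⟨le_refl 0, le_of_lt hT⟩ le_rfl)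
  -- continuity of the kernel in τ
  have hprim : Continuous fun τ : ℝ => ∫ u in (0:ℝ)..τ, β (a + u) := by
    apply intervalIntegral.continuous_primitive
    · intro c d
      exact ((hβcont.comp (continuous_const.add continuous_id)).intervalIntegrable c d)
  have hker : Continuous fun τ : ℝ =>
      Real.exp (-∫ u in (0:ℝ)..τ, β (a + u)) * β (a + τ) := by
    exact (hprim.neg.rexp).mul (hβcont.comp (continuous_const.add continuous_id))
  have hFc : Continuous fun τ : ℝ =>
      Real.exp (-∫ u in (0:ℝ)..τ, β (a + u)) * β (a + τ) * f (t - τ) 0 := by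
    exact hker.mul (hf.comp (by continuity : Continuous fun τ : ℝ => ((t - τ, (0:ℝ)) : ℝ × ℝ)))
  have hGc : Continuous fun τ : ℝ =>
      Real.exp (-∫ u in (0:ℝ)..τ, β (a + u)) * β (a + τ) * g (t - τ) 0 := by
    exact hker.mul (hg.comp (by continuity : Continuous fun τ : ℝ => ((t - τ, (0:ℝ)) : ℝ × ℝ)))
  have hFi : IntervalIntegrable _ volume (0:ℝ) t := hFc.intervalIntegrable (0:ℝ) t
  have hGi : IntervalIntegrable _ volume (0:ℝ) t := hGc.intervalIntegrable (0:ℝ) t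
  have key : Gamma β f₀ f t a - Gamma β f₀ g t a =
      ∫ τ in (0:ℝ)..t, Real.exp (-∫ u in (0:ℝ)..τ, β (a + u)) * β (a + τ) *
        (f (t - τ) 0 - g (t - τ) 0) := by
    unfold Gamma
    rw [add_sub_add_left_eq_sub, ← intervalIntegral.integral_sub hFi hGi]
    congr 1
    ext τ
    ring
  rw [key]
  have hbound : ∀ τ ∈ Set.uIoc (0:ℝ) t,
      ‖Real.exp (-∫ u in (0:ℝ)..τ, β (a + u)) * β (a + τ) *
        (f (t - τ) 0 - g (t - τ) 0)‖ ≤ βmax * C := by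
    intro τ hτ
    rw [Set.uIoc_of_le ht0] at hτ
    obtain ⟨hτ0, hτt⟩ := hτ
    have haτ : 0 ≤ a + τ := by linarith
    have hexp : Real.exp (-∫ u in (0:ℝ)..τ, β (a + u)) ≤ 1 := by
      rw [Real.exp_le_one_iff, neg_nonpos]
      apply intervalIntegral.integral_nonneg (le_of_lt hτ0)
      intro u hu
      exact hβpos _ (by linarith [hu.1])
    have hβ1 : 0 ≤ β (a + τ) := hβpos _ haτ
    have hβ2 : β (a + τ) ≤ βmax := hβbd _ haτ
    have hfg : |f (t - τ) 0 - g (t - τ) 0| ≤ C :=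
      hC (t - τ) 0 ⟨by linarith, by linarith⟩ le_rfl
    rw [Real.norm_eq_abs, abs_mul, abs_mul,
      abs_of_nonneg (Real.exp_pos _).le, abs_of_nonneg hβ1]
    calc Real.exp (-∫ u in (0:ℝ)..τ, β (a + u)) * β (a + τ) * |f (t - τ) 0 - g (t - τ) 0|
        ≤ 1 * βmax * C := by
          apply mul_le_mul _ hfg (abs_nonneg _) (by positivity)
          exact mul_le_mul hexp hβ2 hβ1 zero_le_one
      _ = βmax * C := by ring
  have := intervalIntegral.norm_integral_le_of_norm_le_const hbound
  rw [Real.norm_eq_abs] at this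
  calc |∫ τ in (0:ℝ)..t, Real.exp (-∫ u in (0:ℝ)..τ, β (a + u)) * β (a + τ) *
          (f (t - τ) 0 - g (t - τ) 0)|
      ≤ βmax * C * |t - 0| := this
    _ = βmax * C * t := by rw [sub_zero, abs_of_nonneg ht0]
    _ ≤ βmax * C * T := mul_le_mul_of_nonneg_left htT (by positivity)
    _ = T * βmax * C := by ring
end

section
/- With β continuous, 0 ≤ β ≤ β_max, and f₀ ∈ C_b([0,∞)), the operator Γf(t,a) = f₀(t+a)·exp(−∫₀ᵗ β(a+u)du) + ∫₀ᵗ exp(−∫₀^τ β(a+u)du)·β(a+τ)·f(t−τ,0) dτ maps the closed ball {f : ‖f‖_∞ ≤ ‖f₀‖_∞} of C_b([0,T]×[0,∞)) into itself. -/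
open MeasureTheory intervalIntegral

/-- `Γ` maps the closed ball of radius `‖f₀‖_∞` of `C_b([0,T]×[0,∞))`
into itself. -/
theorem stmt4 (β f₀ : ℝ → ℝ) (βmax T : ℝ) (hβmax : 0 < βmax)
    (hβcont : Continuous β) (hβpos : ∀ a, 0 ≤ a → 0 ≤ β a)
    (hβbd : ∀ a, 0 ≤ a → β a ≤ βmax)
    (hT : 0 < T)
    (hf₀cont : Continuous f₀) (C : ℝ) (hf₀bd : ∀ a, 0 ≤ a → |f₀ a| ≤ C)
    (f : ℝ → ℝ → ℝ) (hf : Continuous fun p : ℝ × ℝ => f p.1 p.2)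
    (hfbd : ∀ t a, t ∈ Set.Icc 0 T → 0 ≤ a → |f t a| ≤ C) :
    ∀ t a, t ∈ Set.Icc 0 T → 0 ≤ a → |Gamma β f₀ f t a| ≤ C := by
  intro t a ht ha
  obtain ⟨ht0, htT⟩ := ht
  have hC : 0 ≤ C := le_trans (abs_nonneg _) (hf₀bd 0 le_rfl)
  have hβa : Continuous fun u : ℝ => β (a + u) :=
    hβcont.comp (continuous_const.add continuous_id)
  set g : ℝ → ℝ := fun τ => ∫ u in (0:ℝ)..τ, β (a + u) with hg
  have hgderiv : ∀ τ : ℝ, HasDerivAt g (β (a + τ)) τ := fun τ =>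
    (hβa.integral_hasStrictDerivAt 0 τ).hasDerivAt
  set E : ℝ → ℝ := fun τ => Real.exp (-(g τ)) with hE
  have hEderiv : ∀ τ : ℝ, HasDerivAt (fun τ => -E τ) (E τ * β (a + τ)) τ := by
    intro τ
    have h := ((hgderiv τ).neg).exp.neg
    have h2 : E τ * β (a + τ) = -(Real.exp ((-g) τ) * -β (a + τ)) := by
      simp only [E, Pi.neg_apply]; ring
    rw [h2]; exact h
  have hEcont : Continuous E :=
    Real.continuous_exp.comp
      (continuous_iff_continuousAt.mpr fun τ => (hgderiv τ).continuousAt).neg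
  have hEβcont : Continuous fun τ => E τ * β (a + τ) := hEcont.mul hβa
  have hE0 : E 0 = 1 := by simp [hE, hg]
  have hEpos : ∀ τ, 0 < E τ := fun τ => Real.exp_pos _
  have key : (∫ τ in (0:ℝ)..t, E τ * β (a + τ)) = 1 - E t := by
    have h := intervalIntegral.integral_eq_sub_of_hasDerivAt
      (f := fun τ => -E τ) (f' := fun τ => E τ * β (a + τ))
      (fun x _ => hEderiv x) (hEβcont.intervalIntegrable 0 t)
    rw [h]; rw [hE0]; ring
  have hbd1 : |f₀ (t + a) * E t| ≤ C * E t := by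
    rw [abs_mul, abs_of_pos (hEpos t)]
    exact mul_le_mul_of_nonneg_right (hf₀bd (t + a) (by linarith)) (hEpos t).le
  have hbd2 : |∫ τ in (0:ℝ)..t, E τ * β (a + τ) * f (t - τ) 0| ≤ C * (1 - E t) := by
    have habs := intervalIntegral.abs_integral_le_integral_abs (f := fun τ => E τ * β (a + τ) * f (t - τ) 0) (μ := volume) ht0
    have hfcont : Continuous fun τ : ℝ => f (t - τ) 0 :=
      hf.comp ((continuous_const.sub continuous_id).prodMk continuous_const)
    have hmono : (∫ τ in (0:ℝ)..t, |E τ * β (a + τ) * f (t - τ) 0|) ≤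
        ∫ τ in (0:ℝ)..t, C * (E τ * β (a + τ)) := by
      apply intervalIntegral.integral_mono_on ht0
      · exact ((hEβcont.mul hfcont).abs).intervalIntegrable 0 t
      · exact (continuous_const.mul hEβcont).intervalIntegrable 0 t
      · intro τ hτ
        obtain ⟨hτ0, hτt⟩ := hτ
        have hβnn : 0 ≤ β (a + τ) := hβpos _ (by linarith)
        have hfb : |f (t - τ) 0| ≤ C := hfbd (t - τ) 0 ⟨by linarith, by linarith⟩ le_rfl
        rw [abs_mul, abs_mul, abs_of_pos (hEpos τ), abs_of_nonneg hβnn]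
        calc E τ * β (a + τ) * |f (t - τ) 0| ≤ E τ * β (a + τ) * C := by
              exact mul_le_mul_of_nonneg_left hfb (mul_nonneg (hEpos τ).le hβnn)
          _ = C * (E τ * β (a + τ)) := by ring
    have hval : (∫ τ in (0:ℝ)..t, C * (E τ * β (a + τ))) = C * (1 - E t) := by
      rw [intervalIntegral.integral_const_mul, key]
    linarith [habs, hmono, hval ▸ hmono]
  have : |Gamma β f₀ f t a| ≤ C * E t + C * (1 - E t) := by
    unfold Gamma
    calc |f₀ (t + a) * Real.exp (-∫ u in (0:ℝ)..t, β (a + u)) +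
        ∫ τ in (0:ℝ)..t, Real.exp (-∫ u in (0:ℝ)..τ, β (a + u)) * β (a + τ) * f (t - τ) 0|
        ≤ |f₀ (t + a) * E t| + |∫ τ in (0:ℝ)..t, E τ * β (a + τ) * f (t - τ) 0| := by
          apply abs_add_le
      _ ≤ C * E t + C * (1 - E t) := add_le_add hbd1 hbd2
  linarith
end

section
/- Let β be continuous, 0 ≤ β ≤ β_max, and let f ∈ C_b([0,∞)×[0,∞)) satisfy the Duhamel formula f(t,a) = f₀(a+t)·exp(−∫₀ᵗβ(a+u)du) + ∫₀ᵗ exp(−∫₀^τ β(a+u)du)·β(a+τ)·f(t−τ,0) dτ for all t,a ≥ 0. If f₀ ≥ 0 then f ≥ 0, and ‖f(t,·)‖_∞ ≤ ‖f₀‖_∞ for all t ≥ 0. -/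
open MeasureTheory intervalIntegral

noncomputable def Bint (β : ℝ → ℝ) (a t : ℝ) : ℝ := ∫ u in (0:ℝ)..t, β (a + u)

lemma Bint_hasDerivAt {β : ℝ → ℝ} (hβ : Continuous β) (a τ : ℝ) :
    HasDerivAt (Bint β a) (β (a + τ)) τ := by
  have hc : Continuous fun u => β (a + u) := hβ.comp (continuous_const.add continuous_id)
  exact intervalIntegral.integral_hasDerivAt_right (hc.intervalIntegrable _ _)
    (hc.stronglyMeasurableAtFilter _ _) hc.continuousAt

lemma Bint_cont {β : ℝ → ℝ} (hβ : Continuous β) (a : ℝ) : Continuous (Bint β a) :=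
  continuous_iff_continuousAt.mpr fun τ => (Bint_hasDerivAt hβ a τ).continuousAt

lemma Bint_key {β : ℝ → ℝ} (hβ : Continuous β) (a t : ℝ) :
    (∫ τ in (0:ℝ)..t, Real.exp (-(Bint β a τ)) * β (a + τ)) =
      1 - Real.exp (-(Bint β a t)) := by
  have hderiv : ∀ τ ∈ Set.uIcc (0:ℝ) t,
      HasDerivAt (fun τ => -Real.exp (-(Bint β a τ)))
        (Real.exp (-(Bint β a τ)) * β (a + τ)) τ := by
    intro τ _
    have h1 : HasDerivAt (fun τ => Real.exp (-(Bint β a τ)))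
        (Real.exp (-(Bint β a τ)) * -(β (a + τ))) τ := ((Bint_hasDerivAt hβ a τ).neg).exp
    have h2 := h1.neg
    exact h2.congr_deriv (by ring)
  have hint : IntervalIntegrable (fun τ => Real.exp (-(Bint β a τ)) * β (a + τ))
      volume 0 t :=
    ((Real.continuous_exp.comp (Bint_cont hβ a).neg).mul
      (hβ.comp (continuous_const.add continuous_id))).intervalIntegrable _ _
  rw [intervalIntegral.integral_eq_sub_of_hasDerivAt hderiv hint]
  have hB0 : Bint β a 0 = 0 := intervalIntegral.integral_same
  simp [hB0]
  ring

lemma Bint_nonneg {β : ℝ → ℝ} (hβpos : ∀ a, 0 ≤ a → 0 ≤ β a) {a t : ℝ}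
    (ha : 0 ≤ a) (ht : 0 ≤ t) : 0 ≤ Bint β a t := by
  apply intervalIntegral.integral_nonneg ht
  intro u hu
  exact hβpos _ (by linarith [hu.1])

/-- a bounded continuous solution of the Duhamel formula for the dual
renewal equation is nonnegative if the initial datum is, and satisfies the sup-norm
bound `‖f(t,·)‖_∞ ≤ ‖f₀‖_∞`. -/
theorem stmt6 (β f₀ : ℝ → ℝ) (βmax : ℝ) (hβcont : Continuous β)
    (hβpos : ∀ a, 0 ≤ a → 0 ≤ β a) (hβbd : ∀ a, 0 ≤ a → β a ≤ βmax)
    (hf₀cont : Continuous f₀) (C : ℝ) (hf₀bd : ∀ a, 0 ≤ a → |f₀ a| ≤ C)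
    (f : ℝ → ℝ → ℝ) (hfcont : Continuous fun p : ℝ × ℝ => f p.1 p.2)
    (hfbdd : ∃ D, ∀ t a, 0 ≤ t → 0 ≤ a → |f t a| ≤ D)
    (hDuh : ∀ t a, 0 ≤ t → 0 ≤ a →
      f t a = f₀ (a + t) * Real.exp (-∫ u in (0:ℝ)..t, β (a + u)) +
        ∫ τ in (0:ℝ)..t, Real.exp (-∫ u in (0:ℝ)..τ, β (a + u)) * β (a + τ) * f (t - τ) 0) :
    ((∀ a, 0 ≤ a → 0 ≤ f₀ a) → ∀ t a, 0 ≤ t → 0 ≤ a → 0 ≤ f t a) ∧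
    (∀ t a, 0 ≤ t → 0 ≤ a → |f t a| ≤ C) := by
  have hDuh' : ∀ t a, 0 ≤ t → 0 ≤ a →
      f t a = f₀ (a + t) * Real.exp (-(Bint β a t)) +
        ∫ τ in (0:ℝ)..t, Real.exp (-(Bint β a τ)) * β (a + τ) * f (t - τ) 0 := hDuh
  -- continuity helpers
  have hβa : ∀ a : ℝ, Continuous fun τ => β (a + τ) :=
    fun a => hβcont.comp (continuous_const.add continuous_id)
  have hE : ∀ a : ℝ, Continuous fun τ => Real.exp (-(Bint β a τ)) :=
    fun a => Real.continuous_exp.comp (Bint_cont hβcont a).neg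
  have hf0cont : Continuous fun s => f s 0 :=
    hfcont.comp (continuous_id.prodMk continuous_const)
  have hIcont : ∀ t a : ℝ, Continuous fun τ =>
      Real.exp (-(Bint β a τ)) * β (a + τ) * f (t - τ) 0 := by
    intro t a
    exact ((hE a).mul (hβa a)).mul
      (hf0cont.comp (continuous_const.sub continuous_id))
  have hEβnn : ∀ a : ℝ, 0 ≤ a → ∀ τ : ℝ, 0 ≤ τ →
      0 ≤ Real.exp (-(Bint β a τ)) * β (a + τ) := by
    intro a ha τ hτ
    exact mul_nonneg (Real.exp_nonneg _) (hβpos _ (by linarith))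
  have hC : 0 ≤ C := le_trans (abs_nonneg _) (hf₀bd 0 le_rfl)
  -- upper bound for the integral term
  have hub : ∀ t a, 0 ≤ t → 0 ≤ a → ∀ M : ℝ,
      (∀ s' ∈ Set.Icc (0:ℝ) t, |f s' 0| ≤ M) →
      |∫ τ in (0:ℝ)..t, Real.exp (-(Bint β a τ)) * β (a + τ) * f (t - τ) 0| ≤
        (1 - Real.exp (-(Bint β a t))) * M := by
    intro t a ht ha M hM
    calc |∫ τ in (0:ℝ)..t, Real.exp (-(Bint β a τ)) * β (a + τ) * f (t - τ) 0|
        ≤ ∫ τ in (0:ℝ)..t, |Real.exp (-(Bint β a τ)) * β (a + τ) * f (t - τ) 0| :=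
          intervalIntegral.abs_integral_le_integral_abs ht
      _ ≤ ∫ τ in (0:ℝ)..t, Real.exp (-(Bint β a τ)) * β (a + τ) * M := by
          apply intervalIntegral.integral_mono_on ht
            ((hIcont t a).abs.intervalIntegrable _ _)
            ((((hE a).mul (hβa a)).mul continuous_const).intervalIntegrable _ _)
          intro τ hτ
          rw [abs_mul, abs_mul, abs_of_nonneg (Real.exp_nonneg _),
            abs_of_nonneg (hβpos _ (by linarith [hτ.1]))]
          exact mul_le_mul_of_nonneg_left
            (hM (t - τ) ⟨by linarith [hτ.2], by linarith [hτ.1]⟩)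
            (hEβnn a ha τ hτ.1)
      _ = (1 - Real.exp (-(Bint β a t))) * M := by
          rw [intervalIntegral.integral_mul_const, Bint_key hβcont, mul_comm]
  -- lower bound for the integral term
  have hlb : ∀ t a, 0 ≤ t → 0 ≤ a → ∀ m : ℝ,
      (∀ s' ∈ Set.Icc (0:ℝ) t, m ≤ f s' 0) →
      (1 - Real.exp (-(Bint β a t))) * m ≤
        ∫ τ in (0:ℝ)..t, Real.exp (-(Bint β a τ)) * β (a + τ) * f (t - τ) 0 := by
    intro t a ht ha m hm
    have : (∫ τ in (0:ℝ)..t, Real.exp (-(Bint β a τ)) * β (a + τ) * m) ≤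
        ∫ τ in (0:ℝ)..t, Real.exp (-(Bint β a τ)) * β (a + τ) * f (t - τ) 0 := by
      apply intervalIntegral.integral_mono_on ht
        ((((hE a).mul (hβa a)).mul continuous_const).intervalIntegrable _ _)
        ((hIcont t a).intervalIntegrable _ _)
      intro τ hτ
      exact mul_le_mul_of_nonneg_left
        (hm (t - τ) ⟨by linarith [hτ.2], by linarith [hτ.1]⟩)
        (hEβnn a ha τ hτ.1)
    calc (1 - Real.exp (-(Bint β a t))) * m
        = ∫ τ in (0:ℝ)..t, Real.exp (-(Bint β a τ)) * β (a + τ) * m := by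
          rw [intervalIntegral.integral_mul_const, Bint_key hβcont, mul_comm]
      _ ≤ _ := this
  have hEle1 : ∀ t a : ℝ, 0 ≤ t → 0 ≤ a → Real.exp (-(Bint β a t)) ≤ 1 := by
    intro t a ht ha
    calc Real.exp (-(Bint β a t)) ≤ Real.exp 0 :=
          Real.exp_le_exp.mpr (neg_nonpos.mpr (Bint_nonneg hβpos ha ht))
      _ = 1 := Real.exp_zero
  -- sup bound at a = 0
  have main2 : ∀ t, 0 ≤ t → ∀ s' ∈ Set.Icc (0:ℝ) t, |f s' 0| ≤ C := by
    intro t ht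
    obtain ⟨s, hsmem, hsmax⟩ := isCompact_Icc.exists_isMaxOn
      (Set.nonempty_Icc.mpr ht) hf0cont.abs.continuousOn
    have hM : ∀ s' ∈ Set.Icc (0:ℝ) t, |f s' 0| ≤ |f s 0| := fun s' hs' => hsmax hs'
    have hs0 : 0 ≤ s := hsmem.1
    have hM' : ∀ s' ∈ Set.Icc (0:ℝ) s, |f s' 0| ≤ |f s 0| := fun s' hs' =>
      hM s' ⟨hs'.1, le_trans hs'.2 hsmem.2⟩
    have hint := hub s 0 hs0 le_rfl _ hM'
    have heq := hDuh' s 0 hs0 le_rfl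
    have hf₀b : |f₀ (0 + s)| ≤ C := hf₀bd _ (by linarith)
    have hMle : |f s 0| ≤ C * Real.exp (-(Bint β 0 s)) +
        (1 - Real.exp (-(Bint β 0 s))) * |f s 0| := by
      conv_lhs => rw [heq]
      refine le_trans (abs_add_le _ _) (add_le_add ?_ hint)
      rw [abs_mul, abs_of_nonneg (Real.exp_nonneg _)]
      exact mul_le_mul_of_nonneg_right hf₀b (Real.exp_nonneg _)
    have hEpos : 0 < Real.exp (-(Bint β 0 s)) := Real.exp_pos _
    have hMC : |f s 0| ≤ C := by nlinarith
    intro s' hs'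
    exact le_trans (hM s' hs') hMC
  constructor
  · -- nonnegativity
    intro hf₀pos
    have main1 : ∀ t, 0 ≤ t → ∀ s' ∈ Set.Icc (0:ℝ) t, 0 ≤ f s' 0 := by
      intro t ht
      obtain ⟨s, hsmem, hsmin⟩ := isCompact_Icc.exists_isMinOn
        (Set.nonempty_Icc.mpr ht) hf0cont.continuousOn
      have hm : ∀ s' ∈ Set.Icc (0:ℝ) t, f s 0 ≤ f s' 0 := fun s' hs' => hsmin hs'
      have hs0 : 0 ≤ s := hsmem.1
      have hm' : ∀ s' ∈ Set.Icc (0:ℝ) s, f s 0 ≤ f s' 0 := fun s' hs' =>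
        hm s' ⟨hs'.1, le_trans hs'.2 hsmem.2⟩
      have hint := hlb s 0 hs0 le_rfl _ hm'
      have heq := hDuh' s 0 hs0 le_rfl
      have hnn : 0 ≤ f₀ (0 + s) * Real.exp (-(Bint β 0 s)) :=
        mul_nonneg (hf₀pos _ (by linarith)) (Real.exp_nonneg _)
      have hge : (1 - Real.exp (-(Bint β 0 s))) * f s 0 ≤ f s 0 := by linarith
      have hEpos : 0 < Real.exp (-(Bint β 0 s)) := Real.exp_pos _
      have hs0pos : 0 ≤ f s 0 := by nlinarith
      intro s' hs'
      exact le_trans hs0pos (hm s' hs')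
    intro t a ht ha
    rw [hDuh' t a ht ha]
    have h1 : 0 ≤ f₀ (a + t) * Real.exp (-(Bint β a t)) :=
      mul_nonneg (hf₀pos _ (by linarith)) (Real.exp_nonneg _)
    have h2 := hlb t a ht ha 0 (fun s' hs' => main1 t ht s' hs')
    rw [mul_zero] at h2
    linarith
  · -- sup-norm bound
    intro t a ht ha
    rw [hDuh' t a ht ha]
    have hint := hub t a ht ha C (main2 t ht)
    have hf₀b : |f₀ (a + t)| ≤ C := hf₀bd _ (by linarith)
    calc |f₀ (a + t) * Real.exp (-(Bint β a t)) +
          ∫ τ in (0:ℝ)..t, Real.exp (-(Bint β a τ)) * β (a + τ) * f (t - τ) 0|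
        ≤ |f₀ (a + t)| * Real.exp (-(Bint β a t)) +
          (1 - Real.exp (-(Bint β a t))) * C := by
          refine le_trans (abs_add_le _ _) (add_le_add ?_ hint)
          rw [abs_mul, abs_of_nonneg (Real.exp_nonneg _)]
      _ ≤ C * Real.exp (-(Bint β a t)) + (1 - Real.exp (-(Bint β a t))) * C :=
          add_le_add (mul_le_mul_of_nonneg_right hf₀b (Real.exp_nonneg _)) le_rfl
      _ = C := by ring
end

section
/- Let β be continuous, 0 ≤ β ≤ β_max, and let f₀, g₀ ∈ C_b([0,∞)) agree on [0,A] for some A > 0. If f and g are the unique solutions of the Duhamel fixed-point equation f(t,a) = f₀(a+t)exp(−∫₀ᵗβ(a+u)du) + ∫₀ᵗ exp(−∫₀^τβ(a+u)du)β(a+τ)f(t−τ,0)dτ with data f₀ and g₀ respectively, then for every T ∈ (0,A), f(t,a) = g(t,a) for all t ∈ [0,T] and a ∈ [0,A−T]. -/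
open MeasureTheory intervalIntegral

/-- `f` is a bounded continuous solution of the Duhamel fixed-point formulation of
the dual renewal equation with initial datum `f₀`. -/
def IsDuhamelSol (β f₀ : ℝ → ℝ) (f : ℝ → ℝ → ℝ) : Prop :=
  (Continuous fun p : ℝ × ℝ => f p.1 p.2) ∧
  (∃ C, ∀ t a, 0 ≤ t → 0 ≤ a → |f t a| ≤ C) ∧
  ∀ t a, 0 ≤ t → 0 ≤ a →
    f t a = f₀ (a + t) * Real.exp (-∫ u in (0:ℝ)..t, β (a + u)) +
      ∫ τ in (0:ℝ)..t, Real.exp (-∫ u in (0:ℝ)..τ, β (a + u)) * β (a + τ) * f (t - τ) 0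

/-- finite speed of propagation — if the initial data agree on `[0,A]`,
the solutions agree on `[0,T] × [0,A−T]` for every `T ∈ (0,A)`. -/
theorem stmt7 (β f₀ g₀ : ℝ → ℝ) (βmax : ℝ) (hβcont : Continuous β)
    (hβpos : ∀ a, 0 ≤ a → 0 ≤ β a) (hβbd : ∀ a, 0 ≤ a → β a ≤ βmax)
    (hf₀ : Continuous f₀) (hg₀ : Continuous g₀)
    (hf₀bd : ∃ C, ∀ a, 0 ≤ a → |f₀ a| ≤ C) (hg₀bd : ∃ C, ∀ a, 0 ≤ a → |g₀ a| ≤ C)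
    (A : ℝ) (hA : 0 < A) (hagree : ∀ a, a ∈ Set.Icc 0 A → f₀ a = g₀ a)
    (f g : ℝ → ℝ → ℝ) (hf : IsDuhamelSol β f₀ f) (hg : IsDuhamelSol β g₀ g) :
    ∀ T, T ∈ Set.Ioo 0 A → ∀ t a, t ∈ Set.Icc 0 T → a ∈ Set.Icc 0 (A - T) →
      f t a = g t a := by
  obtain ⟨hfc, _, hfeq⟩ := hf
  obtain ⟨hgc, _, hgeq⟩ := hg
  set B : ℝ := max βmax 0 with hB
  -- continuity helpers
  have hE : ∀ a : ℝ, Continuous fun τ : ℝ => Real.exp (-∫ u in (0:ℝ)..τ, β (a + u)) := by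
    intro a
    exact Real.continuous_exp.comp <| Continuous.neg <|
      intervalIntegral.continuous_primitive
        (fun c d => ((hβcont.comp (continuous_const.add continuous_id)).intervalIntegrable c d)) 0
  have hfcont : ∀ a : ℝ, Continuous fun τ : ℝ => f τ a :=
    fun a => hfc.comp (continuous_id.prodMk continuous_const)
  have hgcont : ∀ a : ℝ, Continuous fun τ : ℝ => g τ a :=
    fun a => hgc.comp (continuous_id.prodMk continuous_const)
  set h : ℝ → ℝ := fun t => f t 0 - g t 0 with hh
  have hhcont : Continuous h := (hfcont 0).sub (hgcont 0)
  -- integrand continuity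
  have hKcont : ∀ (a : ℝ) (F : ℝ → ℝ), Continuous F →
      ∀ t : ℝ, Continuous fun τ : ℝ =>
        Real.exp (-∫ u in (0:ℝ)..τ, β (a + u)) * β (a + τ) * F (t - τ) := by
    intro a F hF t
    exact ((hE a).mul (hβcont.comp (continuous_const.add continuous_id))).mul
      (hF.comp (continuous_const.sub continuous_id))
  -- key identity: for 0 ≤ t and a+t ≤ A, with 0 ≤ a
  have key : ∀ t a, 0 ≤ t → 0 ≤ a → a + t ≤ A →
      f t a - g t a = ∫ τ in (0:ℝ)..t,
        Real.exp (-∫ u in (0:ℝ)..τ, β (a + u)) * β (a + τ) * h (t - τ) := by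
    intro t a ht ha hta
    rw [hfeq t a ht ha, hgeq t a ht ha,
      hagree (a + t) ⟨by linarith, hta⟩]
    have h1 : IntervalIntegrable (fun τ : ℝ =>
        Real.exp (-∫ u in (0:ℝ)..τ, β (a + u)) * β (a + τ) * f (t - τ) 0) volume 0 t :=
      (hKcont a (fun s => f s 0) (hfcont 0) t).intervalIntegrable 0 t
    have h2 : IntervalIntegrable (fun τ : ℝ =>
        Real.exp (-∫ u in (0:ℝ)..τ, β (a + u)) * β (a + τ) * g (t - τ) 0) volume 0 t :=
      (hKcont a (fun s => g s 0) (hgcont 0) t).intervalIntegrable 0 t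
    rw [show (g₀ (a + t) * Real.exp (-∫ u in (0:ℝ)..t, β (a + u)) +
        ∫ τ in (0:ℝ)..t, Real.exp (-∫ u in (0:ℝ)..τ, β (a + u)) * β (a + τ) * f (t - τ) 0) -
        (g₀ (a + t) * Real.exp (-∫ u in (0:ℝ)..t, β (a + u)) +
        ∫ τ in (0:ℝ)..t, Real.exp (-∫ u in (0:ℝ)..τ, β (a + u)) * β (a + τ) * g (t - τ) 0) =
        (∫ τ in (0:ℝ)..t, Real.exp (-∫ u in (0:ℝ)..τ, β (a + u)) * β (a + τ) * f (t - τ) 0) -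
        ∫ τ in (0:ℝ)..t, Real.exp (-∫ u in (0:ℝ)..τ, β (a + u)) * β (a + τ) * g (t - τ) 0
        from by ring]
    rw [← intervalIntegral.integral_sub h1 h2]
    apply intervalIntegral.integral_congr
    intro τ _
    simp only [hh]
    ring
  -- kernel bound
  have hKbd : ∀ a τ : ℝ, 0 ≤ a → 0 ≤ τ →
      |Real.exp (-∫ u in (0:ℝ)..τ, β (a + u)) * β (a + τ)| ≤ B := by
    intro a τ ha hτ
    have hβτ : 0 ≤ β (a + τ) := hβpos _ (by linarith)
    have hint : 0 ≤ ∫ u in (0:ℝ)..τ, β (a + u) :=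
      intervalIntegral.integral_nonneg hτ (fun u hu => hβpos _ (by linarith [hu.1]))
    have he : Real.exp (-∫ u in (0:ℝ)..τ, β (a + u)) ≤ 1 :=
      Real.exp_le_one_iff.mpr (by linarith)
    have : 0 ≤ Real.exp (-∫ u in (0:ℝ)..τ, β (a + u)) * β (a + τ) :=
      mul_nonneg (Real.exp_pos _).le hβτ
    rw [abs_of_nonneg this]
    calc Real.exp (-∫ u in (0:ℝ)..τ, β (a + u)) * β (a + τ)
        ≤ 1 * β (a + τ) := mul_le_mul_of_nonneg_right he hβτ
      _ = β (a + τ) := one_mul _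
      _ ≤ βmax := hβbd _ (by linarith)
      _ ≤ B := le_max_left _ _
  -- integral inequality for h on the diagonal
  have step : ∀ t ∈ Set.Icc (0:ℝ) A, |h t| ≤ B * ∫ s in (0:ℝ)..t, |h s| := by
    intro t ⟨ht0, htA⟩
    have hk' : h t = ∫ τ in (0:ℝ)..t,
        Real.exp (-∫ u in (0:ℝ)..τ, β (0 + u)) * β (0 + τ) * h (t - τ) :=
      key t 0 ht0 le_rfl (by linarith)
    rw [hk']
    have hint1 : IntervalIntegrable (fun τ : ℝ =>
        |Real.exp (-∫ u in (0:ℝ)..τ, β (0 + u)) * β (0 + τ) * h (t - τ)|) volume 0 t :=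
      ((hKcont 0 h hhcont t).abs).intervalIntegrable 0 t
    have hint2 : IntervalIntegrable (fun τ : ℝ => B * |h (t - τ)|) volume 0 t :=
      (continuous_const.mul ((hhcont.comp (continuous_const.sub continuous_id)).abs)).intervalIntegrable 0 t
    calc |∫ τ in (0:ℝ)..t, Real.exp (-∫ u in (0:ℝ)..τ, β (0 + u)) * β (0 + τ) * h (t - τ)|
        ≤ ∫ τ in (0:ℝ)..t, |Real.exp (-∫ u in (0:ℝ)..τ, β (0 + u)) * β (0 + τ) * h (t - τ)| :=
          intervalIntegral.abs_integral_le_integral_abs ht0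
      _ ≤ ∫ τ in (0:ℝ)..t, B * |h (t - τ)| := by
          apply intervalIntegral.integral_mono_on ht0 hint1 hint2
          intro τ hτ
          rw [abs_mul]
          exact mul_le_mul_of_nonneg_right (hKbd 0 τ le_rfl hτ.1) (abs_nonneg _)
      _ = B * ∫ τ in (0:ℝ)..t, |h (t - τ)| := intervalIntegral.integral_const_mul _ _
      _ = B * ∫ s in (0:ℝ)..t, |h s| := by
          rw [intervalIntegral.integral_comp_sub_left (fun s => |h s|) t]
          simp
  -- Gronwall: ψ = ∫₀ᵗ |h| is zero on [0,A]
  set ψ : ℝ → ℝ := fun t => ∫ s in (0:ℝ)..t, |h s| with hψ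
  have hψderiv : ∀ x : ℝ, HasDerivAt ψ (|h x|) x := by
    intro x
    exact (hhcont.abs.integral_hasStrictDerivAt 0 x).hasDerivAt
  have hψnonneg : ∀ t, 0 ≤ t → 0 ≤ ψ t := by
    intro t ht
    exact intervalIntegral.integral_nonneg ht (fun s _ => abs_nonneg _)
  have hψ0 : ∀ x ∈ Set.Icc (0:ℝ) A, ‖ψ x‖ ≤ gronwallBound 0 B 0 (x - 0) := by
    apply norm_le_gronwallBound_of_norm_deriv_right_le
    · exact (intervalIntegral.continuous_primitive
        (fun c d => hhcont.abs.intervalIntegrable c d) 0).continuousOn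
    · intro x _
      exact (hψderiv x).hasDerivWithinAt
    · simp [hψ]
    · intro x hx
      rw [Real.norm_eq_abs, Real.norm_eq_abs, abs_of_nonneg (abs_nonneg (h x)),
        abs_of_nonneg (hψnonneg x hx.1), add_zero]
      exact step x ⟨hx.1, hx.2.le⟩
  have hzero : ∀ t ∈ Set.Icc (0:ℝ) A, h t = 0 := by
    intro t ht
    have h1 := hψ0 t ht
    rw [gronwallBound_ε0_δ0] at h1
    have hψt : ψ t = 0 := by
      have h2 := hψnonneg t ht.1
      rw [Real.norm_eq_abs, abs_of_nonneg h2] at h1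
      linarith
    have := step t ht
    rw [show (∫ s in (0:ℝ)..t, |h s|) = 0 from hψt] at this
    simp only [mul_zero] at this
    exact abs_eq_zero.mp (le_antisymm this (abs_nonneg _))
  -- conclude
  intro T ⟨hT0, hTA⟩ t a ⟨ht0, htT⟩ ⟨ha0, haAT⟩
  have hta : a + t ≤ A := by linarith
  have hk := key t a ht0 ha0 hta
  have : (∫ τ in (0:ℝ)..t,
      Real.exp (-∫ u in (0:ℝ)..τ, β (a + u)) * β (a + τ) * h (t - τ)) = 0 := by
    rw [intervalIntegral.integral_congr (g := fun _ => (0:ℝ))]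
    · exact intervalIntegral.integral_zero
    · intro τ hτ
      rw [Set.uIcc_of_le ht0] at hτ
      show Real.exp (-∫ u in (0:ℝ)..τ, β (a + u)) * β (a + τ) * h (t - τ) = 0
      rw [hzero _ ⟨by linarith [hτ.2], by linarith [hτ.1]⟩, mul_zero]
  rw [this] at hk
  linarith
end

section
/- Let (M_t)_{t≥0} be the solution semigroup of the dual renewal equation on C_b([0,∞)), where M_t f₀ = f(t,·) with f the unique solution of the Duhamel formula. Then M_0 f = f and M_{t+s} f = M_t(M_s f) for all s, t ≥ 0 and f ∈ C_b([0,∞)). -/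
open MeasureTheory intervalIntegral

/-- Splitting the primitive of `β (a + ·)`. -/
lemma int_split (β : ℝ → ℝ) (hβ : Continuous β) (a t x : ℝ) :
    (∫ u in (0:ℝ)..(t + x), β (a + u)) =
      (∫ u in (0:ℝ)..t, β (a + u)) + ∫ u in (0:ℝ)..x, β (a + t + u) := by
  have hc : Continuous fun u : ℝ => β (a + u) := hβ.comp (continuous_const.add continuous_id)
  have h1 : IntervalIntegrable (fun u => β (a + u)) volume 0 t :=
    hc.intervalIntegrable _ _
  have h2 : IntervalIntegrable (fun u => β (a + u)) volume t (t + x) :=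
    hc.intervalIntegrable _ _
  rw [← integral_add_adjacent_intervals h1 h2]
  congr 1
  have := intervalIntegral.integral_comp_add_left (a := (0:ℝ)) (b := x)
    (fun u => β (a + u)) t
  simp only [add_zero] at this
  rw [← this]
  simp [add_assoc]

/-- the solution operators `M_t f₀ := f(t,·)` of the dual renewal
equation form a semigroup: `M_0 f = f` and `M_{t+s} f = M_t (M_s f)`. -/
theorem stmt8 (β : ℝ → ℝ) (βmax : ℝ) (hβcont : Continuous β)
    (hβpos : ∀ a, 0 ≤ a → 0 ≤ β a) (hβbd : ∀ a, 0 ≤ a → β a ≤ βmax)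
    (M : ℝ → (ℝ → ℝ) → ℝ → ℝ)
    (hM : ∀ f₀ : ℝ → ℝ, Continuous f₀ → (∃ C, ∀ a, 0 ≤ a → |f₀ a| ≤ C) →
      IsDuhamelSol β f₀ (fun t a => M t f₀ a))
    (huniq : ∀ (f₀ : ℝ → ℝ) (f g : ℝ → ℝ → ℝ), IsDuhamelSol β f₀ f →
      IsDuhamelSol β f₀ g → ∀ t a, 0 ≤ t → 0 ≤ a → f t a = g t a) :
    ∀ f : ℝ → ℝ, Continuous f → (∃ C, ∀ a, 0 ≤ a → |f a| ≤ C) →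
      (∀ a, 0 ≤ a → M 0 f a = f a) ∧
      (∀ s t, 0 ≤ s → 0 ≤ t → ∀ a, 0 ≤ a → M (t + s) f a = M t (M s f) a) := by
  intro f hfc hfb
  have hF := hM f hfc hfb
  obtain ⟨hFcont, ⟨C, hFbd⟩, hFeq⟩ := hF
  -- primitive of β (a + ·) and its continuity
  have hβint : ∀ a : ℝ, ∀ b c : ℝ,
      IntervalIntegrable (fun u => β (a + u)) volume b c := fun a b c =>
    (hβcont.comp (continuous_const.add continuous_id)).intervalIntegrable _ _
  have hPrim : ∀ a : ℝ, Continuous fun τ => ∫ u in (0:ℝ)..τ, β (a + u) := fun a =>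
    intervalIntegral.continuous_primitive (hβint a) 0
  have hE : ∀ a : ℝ, Continuous fun τ => Real.exp (-∫ u in (0:ℝ)..τ, β (a + u)) :=
    fun a => Real.continuous_exp.comp (hPrim a).neg
  constructor
  · intro a ha
    have := hFeq 0 a le_rfl ha
    simpa using this
  · intro s t hs ht a ha
    -- M s f is continuous and bounded
    have hMs_cont : Continuous fun a => M s f a :=
      hFcont.comp (Continuous.prodMk continuous_const continuous_id)
    have hMs_bd : ∃ C, ∀ a, 0 ≤ a → |M s f a| ≤ C :=
      ⟨C, fun a ha => hFbd s a hs ha⟩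
    -- the shifted function is a Duhamel solution with datum `M s f`
    have hshift : IsDuhamelSol β (M s f) (fun t a => M (t + s) f a) := by
      refine ⟨?_, ⟨C, fun t a ht ha => hFbd (t + s) a (by linarith) ha⟩, ?_⟩
      · exact hFcont.comp ((continuous_fst.add continuous_const).prodMk continuous_snd)
      · intro t a ht ha
        have key := hFeq (t + s) a (by linarith) ha
        have keyS := hFeq s (a + t) hs (by linarith)
        beta_reduce
        simp only [] at key keyS
        rw [key, keyS]
        set I1 := ∫ u in (0:ℝ)..t, β (a + u) with hI1
        have hEsplit : ∀ x : ℝ, (∫ u in (0:ℝ)..(t + x), β (a + u)) =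
            I1 + ∫ u in (0:ℝ)..x, β (a + t + u) := fun x => int_split β hβcont a t x
        -- split the big integral
        set G : ℝ → ℝ := fun τ =>
          Real.exp (-∫ u in (0:ℝ)..τ, β (a + u)) * β (a + τ) * M (t + s - τ) f 0 with hG
        have hGcont : Continuous G := by
          apply Continuous.mul
          apply Continuous.mul (hE a) (hβcont.comp (continuous_const.add continuous_id))
          exact hFcont.comp ((continuous_const.sub continuous_id).prodMk continuous_const)
        have hsplit : (∫ τ in (0:ℝ)..(t + s), G τ) =
            (∫ τ in (0:ℝ)..t, G τ) + ∫ τ in t..(t + s), G τ :=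
          (integral_add_adjacent_intervals (hGcont.intervalIntegrable _ _)
            (hGcont.intervalIntegrable _ _)).symm
        have hchange : (∫ τ in t..(t + s), G τ) = ∫ τ in (0:ℝ)..s, G (t + τ) := by
          have := intervalIntegral.integral_comp_add_left (a := (0:ℝ)) (b := s) G t
          simp only [add_zero] at this
          rw [this]
        have hGval : ∀ τ : ℝ, G (t + τ) =
            Real.exp (-I1) *
              (Real.exp (-∫ u in (0:ℝ)..τ, β (a + t + u)) * β (a + t + τ) *
                M (s - τ) f 0) := by
          intro τ
          have h1 : t + s - (t + τ) = s - τ := by ring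
          have h2 : a + (t + τ) = a + t + τ := by ring
          rw [hG]
          simp only [h1, h2, hEsplit τ]
          rw [neg_add, Real.exp_add]
          ring
        have hint2 : (∫ τ in (0:ℝ)..s, G (t + τ)) =
            Real.exp (-I1) * ∫ τ in (0:ℝ)..s,
              Real.exp (-∫ u in (0:ℝ)..τ, β (a + t + u)) * β (a + t + τ) *
                M (s - τ) f 0 := by
          rw [← intervalIntegral.integral_const_mul]
          exact intervalIntegral.integral_congr fun τ _ => hGval τ
        have hM0 : ∀ τ : ℝ, M (t - τ + s) f 0 = M (t + s - τ) f 0 := by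
          intro τ; congr 1; ring
        have hfarg : a + (t + s) = a + t + s := by ring
        calc f (a + (t + s)) * Real.exp (-∫ u in (0:ℝ)..(t + s), β (a + u)) +
              ∫ τ in (0:ℝ)..(t + s), G τ
            = f (a + t + s) *
                (Real.exp (-∫ u in (0:ℝ)..s, β (a + t + u)) * Real.exp (-I1)) +
              ((∫ τ in (0:ℝ)..t, G τ) +
                (∫ τ in (0:ℝ)..s,
                  Real.exp (-∫ u in (0:ℝ)..τ, β (a + t + u)) * β (a + t + τ) *
                    M (s - τ) f 0) * Real.exp (-I1)) := by
              rw [hfarg, hEsplit s, hsplit, hchange, hint2, neg_add, Real.exp_add]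
              ring
          _ = _ := by
              have hGt : (∫ τ in (0:ℝ)..t, G τ) = ∫ τ in (0:ℝ)..t,
                  Real.exp (-∫ u in (0:ℝ)..τ, β (a + u)) * β (a + τ) *
                    M (t - τ + s) f 0 :=
                intervalIntegral.integral_congr fun τ _ => by
                  simp only [hG]; rw [hM0 τ]
              rw [hGt]; ring
        done
    have hcomp := hM (M s f) hMs_cont hMs_bd
    exact huniq (M s f) (fun t a => M (t + s) f a) (fun t a => M t (M s f) a)
      hshift hcomp t a ht ha
end

section
/- (Doeblin minorization for the renewal semigroup) Let β be continuous with β_min·1_{[a_*,∞)} ≤ β ≤ β_max and let (M_t) be the dual renewal semigroup. Fix η > 0, set t₀ = a_* + η and c = η·β_min·e^{−β_max(a_*+η)}, and let ν be the uniform probability measure on [0,η]. Then for every nonnegative f₀ ∈ C_b([0,∞)), every t ≥ t₀ and every a ≥ 0: M_t f₀(a) ≥ c·(ν f₀), where ν f₀ = (1/η)∫₀^η f₀(a)da. -/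
open MeasureTheory intervalIntegral

section Aux
variable {β : ℝ → ℝ}

lemma contβa (hβ : Continuous β) (a : ℝ) : Continuous fun u => β (a + u) :=
  hβ.comp (continuous_const.add continuous_id)

lemma contI (hβ : Continuous β) (a : ℝ) :
    Continuous fun T => ∫ u in (0:ℝ)..T, β (a + u) :=
  intervalIntegral.continuous_primitive (fun c d => (contβa hβ a).intervalIntegrable c d) 0

lemma contE (hβ : Continuous β) (a : ℝ) :
    Continuous fun τ => Real.exp (-∫ u in (0:ℝ)..τ, β (a + u)) :=
  Real.continuous_exp.comp (contI hβ a).neg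

lemma ftcE (hβ : Continuous β) (a T : ℝ) :
    ∫ τ in (0:ℝ)..T, Real.exp (-∫ u in (0:ℝ)..τ, β (a + u)) * β (a + τ)
      = 1 - Real.exp (-∫ u in (0:ℝ)..T, β (a + u)) := by
  have hI : ∀ x : ℝ, HasDerivAt (fun τ => ∫ u in (0:ℝ)..τ, β (a + u)) (β (a + x)) x := by
    intro x
    exact intervalIntegral.integral_hasDerivAt_right
      ((contβa hβ a).intervalIntegrable 0 x)
      ((contβa hβ a).stronglyMeasurableAtFilter _ _)
      (contβa hβ a).continuousAt
  have hF : ∀ x : ℝ, HasDerivAt (fun τ => -Real.exp (-∫ u in (0:ℝ)..τ, β (a + u)))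
      (Real.exp (-∫ u in (0:ℝ)..x, β (a + u)) * β (a + x)) x := by
    intro x
    have h2 := ((hI x).neg).exp
    have h3 : HasDerivAt (fun τ => -Real.exp (-∫ u in (0:ℝ)..τ, β (a + u)))
        (-(Real.exp (-∫ u in (0:ℝ)..x, β (a + u)) * -β (a + x))) x := h2.neg
    convert h3 using 1
    ring
  have hint : IntervalIntegrable
      (fun τ => Real.exp (-∫ u in (0:ℝ)..τ, β (a + u)) * β (a + τ)) volume 0 T :=
    ((contE hβ a).mul (contβa hβ a)).intervalIntegrable 0 T
  rw [intervalIntegral.integral_eq_sub_of_hasDerivAt (fun x _ => hF x) hint]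
  simp only [intervalIntegral.integral_same, neg_zero, Real.exp_zero]
  ring

lemma intub (hβ : Continuous β) {βmax : ℝ} (hβbd : ∀ a, 0 ≤ a → β a ≤ βmax)
    {a T₁ T₂ : ℝ} (ha : 0 ≤ a) (h1 : 0 ≤ T₁) (h12 : T₁ ≤ T₂) :
    ∫ u in T₁..T₂, β (a + u) ≤ βmax * (T₂ - T₁) := by
  have := intervalIntegral.integral_mono_on (μ := volume) h12
    ((contβa hβ a).intervalIntegrable T₁ T₂)
    (_root_.intervalIntegrable_const (c := βmax))
    (fun x hx => hβbd _ (by have := hx.1; linarith))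
  simpa [mul_comm] using this

lemma fnonneg (hβcont : Continuous β) (hβpos : ∀ a, 0 ≤ a → 0 ≤ β a)
    {f₀ : ℝ → ℝ} (hf₀pos : ∀ a, 0 ≤ a → 0 ≤ f₀ a)
    {f : ℝ → ℝ → ℝ} (hf : IsDuhamelSol β f₀ f) :
    ∀ t a, 0 ≤ t → 0 ≤ a → 0 ≤ f t a := by
  obtain ⟨hfc, -, hfeq⟩ := hf
  have hg : Continuous fun s => f s 0 := hfc.comp (continuous_id.prodMk continuous_const)
  have key : ∀ T, 0 ≤ T → ∀ s, s ∈ Set.Icc (0:ℝ) T → 0 ≤ f s 0 := by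
    intro T hT
    by_contra hcon
    push_neg at hcon
    obtain ⟨sb, hsb, hsbneg⟩ := hcon
    obtain ⟨s₀, hs₀mem, hmin⟩ := isCompact_Icc.exists_isMinOn (Set.nonempty_Icc.mpr hT)
      (hg.continuousOn (s := Set.Icc 0 T))
    set m := f s₀ 0 with hm
    have hmin' : ∀ x, x ∈ Set.Icc (0:ℝ) T → m ≤ f x 0 := fun x hx => isMinOn_iff.mp hmin x hx
    have hmneg : m < 0 := lt_of_le_of_lt (hmin' sb hsb) hsbneg
    have hs₀0 : (0:ℝ) ≤ s₀ := hs₀mem.1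
    have heq := hfeq s₀ 0 hs₀0 le_rfl
    have hkcont : Continuous fun τ => Real.exp (-∫ u in (0:ℝ)..τ, β (0 + u)) * β (0 + τ) :=
      (contE hβcont 0).mul (contβa hβcont 0)
    have hKcont : Continuous fun τ =>
        Real.exp (-∫ u in (0:ℝ)..τ, β (0 + u)) * β (0 + τ) * f (s₀ - τ) 0 :=
      hkcont.mul (hfc.comp ((continuous_const.sub continuous_id).prodMk continuous_const))
    have hlow : m * (1 - Real.exp (-∫ u in (0:ℝ)..s₀, β (0 + u)))
        ≤ ∫ τ in (0:ℝ)..s₀, Real.exp (-∫ u in (0:ℝ)..τ, β (0 + u)) * β (0 + τ) * f (s₀ - τ) 0 := by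
      rw [← ftcE hβcont 0 s₀, ← intervalIntegral.integral_const_mul]
      apply intervalIntegral.integral_mono_on hs₀0
        ((continuous_const.mul hkcont).intervalIntegrable 0 s₀) (hKcont.intervalIntegrable 0 s₀)
      intro τ hτ
      have hk0 : 0 ≤ Real.exp (-∫ u in (0:ℝ)..τ, β (0 + u)) * β (0 + τ) :=
        mul_nonneg (Real.exp_pos _).le (hβpos _ (by linarith [hτ.1]))
      have hfm : m ≤ f (s₀ - τ) 0 :=
        hmin' _ ⟨by linarith [hτ.2], by linarith [hτ.1, hs₀mem.2]⟩
      calc m * (Real.exp (-∫ u in (0:ℝ)..τ, β (0 + u)) * β (0 + τ))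
          = Real.exp (-∫ u in (0:ℝ)..τ, β (0 + u)) * β (0 + τ) * m := by ring
        _ ≤ _ := mul_le_mul_of_nonneg_left hfm hk0
    have h1 : 0 ≤ f₀ (0 + s₀) * Real.exp (-∫ u in (0:ℝ)..s₀, β (0 + u)) :=
      mul_nonneg (hf₀pos _ (by linarith)) (Real.exp_pos _).le
    nlinarith [Real.exp_pos (-∫ u in (0:ℝ)..s₀, β (0 + u)), heq]
  intro t a ht ha
  rw [hfeq t a ht ha]
  have h2 : 0 ≤ ∫ τ in (0:ℝ)..t,
      Real.exp (-∫ u in (0:ℝ)..τ, β (a + u)) * β (a + τ) * f (t - τ) 0 := by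
    apply intervalIntegral.integral_nonneg ht
    intro τ hτ
    exact mul_nonneg (mul_nonneg (Real.exp_pos _).le (hβpos _ (by linarith [hτ.1])))
      (key t ht _ ⟨by linarith [hτ.2], by linarith [hτ.1]⟩)
  have h1 : 0 ≤ f₀ (a + t) * Real.exp (-∫ u in (0:ℝ)..t, β (a + u)) :=
    mul_nonneg (hf₀pos _ (by linarith)) (Real.exp_pos _).le
  linarith

lemma glow (hβcont : Continuous β) (hβpos : ∀ a, 0 ≤ a → 0 ≤ β a)
    {βmax : ℝ} (hβbd : ∀ a, 0 ≤ a → β a ≤ βmax)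
    {f₀ : ℝ → ℝ} (hf₀pos : ∀ a, 0 ≤ a → 0 ≤ f₀ a)
    {f : ℝ → ℝ → ℝ} (hf : IsDuhamelSol β f₀ f) :
    ∀ s, 0 ≤ s → f₀ s * Real.exp (-(βmax * s)) ≤ f s 0 := by
  intro s hs
  rw [hf.2.2 s 0 hs le_rfl]
  have hI : ∫ u in (0:ℝ)..s, β (0 + u) ≤ βmax * s := by
    have := intub hβcont hβbd (a := 0) le_rfl le_rfl hs
    simpa using this
  have h1 : f₀ s * Real.exp (-(βmax * s)) ≤ f₀ (0 + s) * Real.exp (-∫ u in (0:ℝ)..s, β (0 + u)) := by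
    rw [zero_add]
    exact mul_le_mul_of_nonneg_left (Real.exp_le_exp.mpr (by linarith)) (hf₀pos s hs)
  have h2 : 0 ≤ ∫ τ in (0:ℝ)..s,
      Real.exp (-∫ u in (0:ℝ)..τ, β (0 + u)) * β (0 + τ) * f (s - τ) 0 := by
    apply intervalIntegral.integral_nonneg hs
    intro τ hτ
    exact mul_nonneg (mul_nonneg (Real.exp_pos _).le (hβpos _ (by linarith [hτ.1])))
      (fnonneg hβcont hβpos hf₀pos hf _ _ (by linarith [hτ.2]) le_rfl)
  linarith

lemma step (hβcont : Continuous β) (hβpos : ∀ a, 0 ≤ a → 0 ≤ β a)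
    {astar βmin βmax η : ℝ} (hastar : 0 < astar) (hβmin : 0 < βmin) (hβmax : 0 < βmax)
    (hη : 0 < η) (hβlow : ∀ a, astar ≤ a → βmin ≤ β a) (hβbd : ∀ a, 0 ≤ a → β a ≤ βmax)
    {f₀ : ℝ → ℝ} (hf₀cont : Continuous f₀) (hf₀pos : ∀ a, 0 ≤ a → 0 ≤ f₀ a)
    {f : ℝ → ℝ → ℝ} (hf : IsDuhamelSol β f₀ f)
    {m : ℝ} (hm : m ≤ βmin * Real.exp (-(βmax * (astar + η))) * ∫ x in (0:ℝ)..η, f₀ x)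
    {t a : ℝ} (ht : astar + η ≤ t) (ha : 0 ≤ a)
    (hgm : ∀ s, astar + η ≤ s → s ≤ t → m ≤ f s 0) :
    m + Real.exp (-(βmax * (t - (astar + η)))) *
      ((βmin * Real.exp (-(βmax * (astar + η))) * ∫ x in (0:ℝ)..η, f₀ x) - m) ≤ f t a := by
  have hfc := hf.1
  have hfeq := hf.2.2
  set cν := βmin * Real.exp (-(βmax * (astar + η))) * ∫ x in (0:ℝ)..η, f₀ x with hcν
  set D := t - (astar + η) with hDdef
  have hD : 0 ≤ D := by simp [hDdef]; linarith
  have hDη : D ≤ t - η := by simp [hDdef]; linarith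
  have ht0 : 0 ≤ t := by linarith
  have hηt : 0 ≤ t - η := by linarith
  set K : ℝ → ℝ := fun τ =>
    Real.exp (-∫ u in (0:ℝ)..τ, β (a + u)) * β (a + τ) * f (t - τ) 0 with hKdef
  have hKcont : Continuous K :=
    ((contE hβcont a).mul (contβa hβcont a)).mul
      (hfc.comp ((continuous_const.sub continuous_id).prodMk continuous_const))
  have hsplit : ∫ τ in (0:ℝ)..t, K τ
      = (∫ τ in (0:ℝ)..D, K τ) + (∫ τ in D..(t - η), K τ) + ∫ τ in (t - η)..t, K τ := by
    rw [intervalIntegral.integral_add_adjacent_intervals (hKcont.intervalIntegrable 0 D)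
      (hKcont.intervalIntegrable D (t - η)),
      intervalIntegral.integral_add_adjacent_intervals (hKcont.intervalIntegrable 0 (t - η))
      (hKcont.intervalIntegrable (t - η) t)]
  set E := Real.exp (-∫ u in (0:ℝ)..D, β (a + u)) with hEdef
  -- I1
  have hkcont : Continuous fun τ => Real.exp (-∫ u in (0:ℝ)..τ, β (a + u)) * β (a + τ) :=
    (contE hβcont a).mul (contβa hβcont a)
  have hI1 : m * (1 - E) ≤ ∫ τ in (0:ℝ)..D, K τ := by
    rw [hEdef, ← ftcE hβcont a D, ← intervalIntegral.integral_const_mul]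
    apply intervalIntegral.integral_mono_on hD
      ((continuous_const.mul hkcont).intervalIntegrable 0 D) (hKcont.intervalIntegrable 0 D)
    intro τ hτ
    have hk0 : 0 ≤ Real.exp (-∫ u in (0:ℝ)..τ, β (a + u)) * β (a + τ) :=
      mul_nonneg (Real.exp_pos _).le (hβpos _ (by linarith [hτ.1]))
    have hfm : m ≤ f (t - τ) 0 := hgm _ (by simp [hDdef] at hτ; linarith [hτ.2]) (by linarith [hτ.1])
    calc m * (Real.exp (-∫ u in (0:ℝ)..τ, β (a + u)) * β (a + τ))
        = Real.exp (-∫ u in (0:ℝ)..τ, β (a + u)) * β (a + τ) * m := by ring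
      _ ≤ K τ := mul_le_mul_of_nonneg_left hfm hk0
  -- I2
  have hI2 : 0 ≤ ∫ τ in D..(t - η), K τ := by
    apply intervalIntegral.integral_nonneg hDη
    intro τ hτ
    exact mul_nonneg (mul_nonneg (Real.exp_pos _).le (hβpos _ (by linarith [hτ.1, hD])))
      (fnonneg hβcont hβpos hf₀pos hf _ _ (by linarith [hτ.2]) le_rfl)
  -- I3
  have hI3 : E * cν ≤ ∫ τ in (t - η)..t, K τ := by
    have hc : ∫ τ in (t - η)..t, (E * (βmin * Real.exp (-(βmax * (astar + η))))) * f₀ (t - τ)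
        = E * cν := by
      rw [intervalIntegral.integral_const_mul, intervalIntegral.integral_comp_sub_left f₀ t]
      simp only [sub_self, sub_sub_cancel]
      rw [hcν]; ring
    rw [← hc]
    apply intervalIntegral.integral_mono_on (by linarith)
      ((continuous_const.mul (hf₀cont.comp (continuous_const.sub continuous_id))).intervalIntegrable _ _)
      (hKcont.intervalIntegrable _ _)
    intro τ hτ
    have hτ1 : t - η ≤ τ := hτ.1
    have hτ2 : τ ≤ t := hτ.2
    have hEτ : E * Real.exp (-(βmax * (τ - D))) ≤ Real.exp (-∫ u in (0:ℝ)..τ, β (a + u)) := by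
      have hadd : (∫ u in (0:ℝ)..D, β (a + u)) + ∫ u in D..τ, β (a + u)
          = ∫ u in (0:ℝ)..τ, β (a + u) :=
        intervalIntegral.integral_add_adjacent_intervals
          ((contβa hβcont a).intervalIntegrable _ _) ((contβa hβcont a).intervalIntegrable _ _)
      have hub : ∫ u in D..τ, β (a + u) ≤ βmax * (τ - D) :=
        intub hβcont hβbd ha hD (by linarith)
      rw [hEdef, ← Real.exp_add]
      apply Real.exp_le_exp.mpr
      rw [← hadd]
      linarith
    have hβτ : βmin ≤ β (a + τ) := hβlow _ (by linarith)
    have hfτ : Real.exp (-(βmax * (t - τ))) * f₀ (t - τ) ≤ f (t - τ) 0 := by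
      have := glow hβcont hβpos hβbd hf₀pos hf (t - τ) (by linarith)
      linarith [this, mul_comm (f₀ (t - τ)) (Real.exp (-(βmax * (t - τ))))]
    have hexpeq : Real.exp (-(βmax * (astar + η)))
        = Real.exp (-(βmax * (τ - D))) * Real.exp (-(βmax * (t - τ))) := by
      rw [← Real.exp_add]
      congr 1
      rw [hDdef]; ring
    calc E * (βmin * Real.exp (-(βmax * (astar + η)))) * f₀ (t - τ)
        = (E * Real.exp (-(βmax * (τ - D))) * βmin) *
            (Real.exp (-(βmax * (t - τ))) * f₀ (t - τ)) := by rw [hexpeq]; ring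
      _ ≤ (Real.exp (-∫ u in (0:ℝ)..τ, β (a + u)) * β (a + τ)) *
            (Real.exp (-(βmax * (t - τ))) * f₀ (t - τ)) := by
          apply mul_le_mul_of_nonneg_right (mul_le_mul hEτ hβτ hβmin.le (Real.exp_pos _).le)
          exact mul_nonneg (Real.exp_pos _).le (hf₀pos _ (by linarith))
      _ ≤ K τ := by
          apply mul_le_mul_of_nonneg_left hfτ
          exact mul_nonneg (Real.exp_pos _).le (hβpos _ (by linarith))
  -- term0
  have h0 : 0 ≤ f₀ (a + t) * Real.exp (-∫ u in (0:ℝ)..t, β (a + u)) :=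
    mul_nonneg (hf₀pos _ (by linarith)) (Real.exp_pos _).le
  -- E lower bound
  have hEX : Real.exp (-(βmax * D)) ≤ E := by
    rw [hEdef]
    apply Real.exp_le_exp.mpr
    have := intub hβcont hβbd (a := a) ha le_rfl hD
    simp only [sub_zero] at this
    linarith
  have hcm : 0 ≤ cν - m := by linarith
  have hfin : m + Real.exp (-(βmax * D)) * (cν - m) ≤ m * (1 - E) + 0 + E * cν := by
    have := mul_le_mul_of_nonneg_right hEX hcm
    nlinarith
  rw [hfeq t a ht0 ha, hsplit]
  have : -(βmax * (t - (astar + η))) = -(βmax * D) := by rw [hDdef]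
  rw [this]
  linarith
end Aux

/-- Doeblin minorization for the renewal semigroup: for `t₀ = a_* + η`
and `c = η β_min e^{−β_max(a_*+η)}`, the solution `M_t f₀` of the dual renewal equation
with nonnegative data `f₀` satisfies `M_t f₀(a) ≥ c (ν f₀)` for `t ≥ t₀`, `a ≥ 0`,
where `ν f₀ = (1/η)∫₀^η f₀`. -/
theorem stmt15 (β f₀ : ℝ → ℝ) (astar βmin βmax η : ℝ)
    (hastar : 0 < astar) (hβmin : 0 < βmin) (hβmax : 0 < βmax) (hη : 0 < η)
    (hβcont : Continuous β) (hβpos : ∀ a, 0 ≤ a → 0 ≤ β a)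
    (hβlow : ∀ a, astar ≤ a → βmin ≤ β a) (hβbd : ∀ a, 0 ≤ a → β a ≤ βmax)
    (hf₀cont : Continuous f₀) (hf₀bd : ∃ C, ∀ a, 0 ≤ a → |f₀ a| ≤ C)
    (hf₀pos : ∀ a, 0 ≤ a → 0 ≤ f₀ a)
    (f : ℝ → ℝ → ℝ) (hf : IsDuhamelSol β f₀ f) :
    ∀ t a, astar + η ≤ t → 0 ≤ a →
      η * βmin * Real.exp (-βmax * (astar + η)) * ((1 / η) * ∫ x in (0:ℝ)..η, f₀ x)
        ≤ f t a := by
  intro t a ht ha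
  have hfc := hf.1
  have hg : Continuous fun s => f s 0 := hfc.comp (continuous_id.prodMk continuous_const)
  set cν := βmin * Real.exp (-(βmax * (astar + η))) * ∫ x in (0:ℝ)..η, f₀ x with hcν
  have hν0 : 0 ≤ ∫ x in (0:ℝ)..η, f₀ x :=
    intervalIntegral.integral_nonneg hη.le (fun x hx => hf₀pos x hx.1)
  have hcν0 : 0 ≤ cν := mul_nonneg (mul_nonneg hβmin.le (Real.exp_pos _).le) hν0
  have hnn := fnonneg hβcont hβpos hf₀pos hf
  have main : ∀ s, astar + η ≤ s → cν ≤ f s 0 := by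
    rcases eq_or_lt_of_le hcν0 with hcz | hcpos
    · intro s hs
      rw [← hcz]
      exact hnn s 0 (by linarith) le_rfl
    intro s hs
    have hlam : ∀ lam : ℝ, 0 ≤ lam → lam < 1 → ∀ s', astar + η ≤ s' → lam * cν ≤ f s' 0 := by
      intro lam hlam0 hlam1
      by_contra hcon
      push_neg at hcon
      obtain ⟨s1, hs1, hs1lt⟩ := hcon
      set B := {s : ℝ | astar + η ≤ s ∧ f s 0 < lam * cν} with hB
      have hBne : B.Nonempty := ⟨s1, hs1, hs1lt⟩
      have hBbd : BddBelow B := ⟨astar + η, fun x hx => hx.1⟩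
      set ts := sInf B with hts
      have htslb : ∀ b ∈ B, ts ≤ b := fun b hb => csInf_le hBbd hb
      have hts0 : astar + η ≤ ts := le_csInf hBne (fun b hb => hb.1)
      have hbelow : ∀ s', astar + η ≤ s' → s' < ts → lam * cν ≤ f s' 0 := by
        intro s' hs' hslt
        by_contra h
        push_neg at h
        exact absurd (htslb s' ⟨hs', h⟩) (not_le.mpr hslt)
      have hlamc : lam * cν ≤ cν := by nlinarith
      have hat : lam * cν ≤ f ts 0 := by
        rcases eq_or_lt_of_le hts0 with heq | hlt
        · have hst := step hβcont hβpos hastar hβmin hβmax hη hβlow hβbd hf₀cont hf₀pos hf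
            (m := 0) (by rw [← hcν]; exact hcν0) hts0 le_rfl
            (fun s' hs' hle => hnn s' 0 (by linarith) le_rfl)
          rw [← heq] at hst
          simp only [sub_self, mul_zero, neg_zero, Real.exp_zero, zero_add, sub_zero,
            one_mul] at hst
          rw [← hcν, heq] at hst
          linarith
        · by_contra hlt2
          push_neg at hlt2
          have hopen : IsOpen {s' : ℝ | f s' 0 < lam * cν} := isOpen_lt hg continuous_const
          obtain ⟨δ, hδ, hball⟩ := Metric.isOpen_iff.mp hopen ts hlt2
          have hsmem : max (astar + η) (ts - δ / 2) < ts := max_lt hlt (by linarith)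
          have hdist : dist (max (astar + η) (ts - δ / 2)) ts < δ := by
            rw [Real.dist_eq, abs_lt]
            constructor
            · have : ts - δ / 2 ≤ max (astar + η) (ts - δ / 2) := le_max_right _ _
              linarith
            · linarith
          have := hball hdist
          exact absurd this (not_lt.mpr (hbelow _ (le_max_left _ _) hsmem))
      have hcl : ∀ s', astar + η ≤ s' → s' ≤ ts → lam * cν ≤ f s' 0 := by
        intro s' hs' hle
        rcases lt_or_eq_of_le hle with h | h
        · exact hbelow s' hs' h
        · rw [h]; exact hat
      have hstep := step hβcont hβpos hastar hβmin hβmax hη hβlow hβbd hf₀cont hf₀pos hf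
        (m := lam * cν) (by rw [← hcν]; exact hlamc) hts0 le_rfl hcl
      rw [← hcν] at hstep
      set ρ := Real.exp (-(βmax * (ts - (astar + η)))) * (cν - lam * cν) with hρ
      have hρpos : 0 < ρ := mul_pos (Real.exp_pos _) (by nlinarith)
      have hopen2 : IsOpen {s' : ℝ | lam * cν < f s' 0} := isOpen_lt continuous_const hg
      obtain ⟨δ, hδ, hball⟩ := Metric.isOpen_iff.mp hopen2 ts (by
        show lam * cν < f ts 0
        linarith)
      obtain ⟨b, hbB, hblt⟩ := exists_lt_of_csInf_lt hBne (show sInf B < ts + δ by linarith)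
      have hbge : ts ≤ b := htslb b hbB
      have hbdist : dist b ts < δ := by
        rw [Real.dist_eq, abs_lt]
        constructor <;> linarith
      exact absurd (hball hbdist) (not_lt.mpr hbB.2.le)
    by_contra hlow
    push_neg at hlow
    have hfs0 : 0 ≤ f s 0 := hnn s 0 (by linarith) le_rfl
    set r := f s 0 / cν with hr
    have hr1 : r < 1 := (div_lt_one hcpos).mpr hlow
    have hr0 : 0 ≤ r := div_nonneg hfs0 hcpos.le
    have h1 := hlam ((r + 1) / 2) (by linarith) (by linarith) s hs
    have : (r + 1) / 2 * cν > f s 0 := by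
      have : f s 0 = r * cν := by rw [hr]; field_simp
      nlinarith
    linarith
  have hstep := step hβcont hβpos hastar hβmin hβmax hη hβlow hβbd hf₀cont hf₀pos hf
    (m := cν) (le_of_eq hcν) ht ha (fun s' hs' _ => main s' hs')
  rw [← hcν] at hstep
  have hLHS : η * βmin * Real.exp (-βmax * (astar + η)) * ((1 / η) * ∫ x in (0:ℝ)..η, f₀ x)
      = cν := by
    rw [hcν, neg_mul]
    field_simp
  rw [hLHS]
  simp only [sub_self, mul_zero, add_zero] at hstep
  exact hstep
end
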